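/- For t > 0 and x > 1, setting y = √(x−1)·√(t+x−1)/√x and λ = √(x−1)·√x·√(t+x−1) / (2(t−2)x − t + 3x² + 1), one has y > 0, λ > 0, the denominator 2(t−2)x − t + 3x² + 1 is positive, and λy < 1, and moreover t/(t+2x−2) = −λt/(y(λy−1)); i.e. these choices solve the consistency equations for Z. -/

import Mathlib

/-- The explicit choices of `y` and `λ` in terms of `t > 0` and `x > 1` solve
the consistency equations for `Z`. -/
theorem stmt6 (t x : ℝ) (ht : 0 < t) (hx : 1 < x) :
    let y := Real.sqrt (x - 1) * Real.sqrt (t + x - 1) / Real.sqrt x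
    let l := Real.sqrt (x - 1) * Real.sqrt x * Real.sqrt (t + x - 1) /
      (2 * (t - 2) * x - t + 3 * x ^ 2 + 1)
    0 < y ∧ 0 < l ∧ 0 < 2 * (t - 2) * x - t + 3 * x ^ 2 + 1 ∧ l * y < 1 ∧
      t / (t + 2 * x - 2) = -(l * t) / (y * (l * y - 1)) := by
  intro y l
  have ha : (0:ℝ) < x - 1 := by linarith
  have hb : (0:ℝ) < t + x - 1 := by linarith
  have hx0 : (0:ℝ) < x := by linarith
  have hD : (0:ℝ) < 2 * (t - 2) * x - t + 3 * x ^ 2 + 1 := by nlinarith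
  have sa : 0 < Real.sqrt (x-1) := Real.sqrt_pos.mpr ha
  have sb : 0 < Real.sqrt (t+x-1) := Real.sqrt_pos.mpr hb
  have sx : 0 < Real.sqrt x := Real.sqrt_pos.mpr hx0
  have ha2 : Real.sqrt (x-1) ^ 2 = x - 1 := Real.sq_sqrt ha.le
  have hb2 : Real.sqrt (t+x-1) ^ 2 = t + x - 1 := Real.sq_sqrt hb.le
  have hx2 : Real.sqrt x ^ 2 = x := Real.sq_sqrt hx0.le
  have hy : 0 < y := div_pos (mul_pos sa sb) sx
  have hl : 0 < l := div_pos (mul_pos (mul_pos sa sx) sb) hD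
  have hly : l * y = (x-1)*(t+x-1)/(2*(t-2)*x - t + 3*x^2+1) := by
    show Real.sqrt (x - 1) * Real.sqrt x * Real.sqrt (t + x - 1) /
      (2 * (t - 2) * x - t + 3 * x ^ 2 + 1) *
      (Real.sqrt (x - 1) * Real.sqrt (t + x - 1) / Real.sqrt x) = _
    rw [div_mul_div_comm]
    rw [show Real.sqrt (x - 1) * Real.sqrt x * Real.sqrt (t + x - 1) *
        (Real.sqrt (x - 1) * Real.sqrt (t + x - 1)) =
        (x-1)*(t+x-1) * Real.sqrt x by
      linear_combination (Real.sqrt x * Real.sqrt (t+x-1)^2) * ha2 +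
        ((x-1) * Real.sqrt x) * hb2]
    rw [mul_comm (2 * (t - 2) * x - t + 3 * x ^ 2 + 1) (Real.sqrt x), mul_comm ((x-1)*(t+x-1)) (Real.sqrt x),
      mul_div_mul_left _ _ sx.ne']
  have hlt : l * y < 1 := by
    rw [hly, div_lt_one hD]; nlinarith
  refine ⟨hy, hl, hD, hlt, ?_⟩
  have hly1 : l * y - 1 = -(x * (t + 2*x - 2)) / (2*(t-2)*x - t + 3*x^2+1) := by
    rw [hly, div_sub_one hD.ne']; ring
  have hne : y * (l * y - 1) ≠ 0 := by
    rw [hly1]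
    have : -(x * (t + 2*x - 2)) / (2*(t-2)*x - t + 3*x^2+1) < 0 := by
      apply div_neg_of_neg_of_pos _ hD; nlinarith
    exact mul_ne_zero hy.ne' this.ne
  rw [div_eq_div_iff (by linarith) hne, hly1]
  show t * (Real.sqrt (x - 1) * Real.sqrt (t + x - 1) / Real.sqrt x *
    (-(x * (t + 2 * x - 2)) / (2 * (t - 2) * x - t + 3 * x ^ 2 + 1))) =
    -(Real.sqrt (x - 1) * Real.sqrt x * Real.sqrt (t + x - 1) /
      (2 * (t - 2) * x - t + 3 * x ^ 2 + 1) * t) * (t + 2 * x - 2)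
  have hDne := hD.ne'
  have sxne := sx.ne'
  field_simp
  rw [hx2]
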